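/- Let B be an n×n skew-symmetrizable integer matrix with skew-symmetrizer S (positive integer diagonal, SB skew-symmetric). For every vertex t of the n-regular tree, the F-matrices satisfy F_t^{B;t_0} = S^{-1} · F_t^{-B^T;t_0} · S, given that the C-matrices satisfy C_t^{B;t_0} = S^{-1} C_t^{-B^T;t_0} S and the exchange matrices satisfy B_t = S^{-1}(-B_t^T)S for all t, and the F-matrices satisfy the mutation recursion F_{t'} = F_t J_ℓ + max([C_t]_+^{•ℓ} + F_t[B_t]_+^{•ℓ}, [-C_t]_+^{•ℓ} + F_t[-B_t]_+^{•ℓ}) along an edge t —ℓ— t' with initial condition F_{t_0} = 0. -/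

import Mathlib

open Matrix

/-- `J_ℓ`: the identity matrix with the `(ℓ,ℓ)` entry replaced by `-1`. -/
def Jmat {n : ℕ} (ℓ : Fin n) : Matrix (Fin n) (Fin n) ℚ :=
  fun i j => if i = j then (if i = ℓ then -1 else 1) else 0

/-- Entrywise positive part `[A]₊`. -/
def posP {n : ℕ} (A : Matrix (Fin n) (Fin n) ℚ) : Matrix (Fin n) (Fin n) ℚ :=
  fun i j => max (A i j) 0

/-- `A^{•ℓ}`: replace all columns except the `ℓ`-th by zero. -/
def colR {n : ℕ} (ℓ : Fin n) (A : Matrix (Fin n) (Fin n) ℚ) : Matrix (Fin n) (Fin n) ℚ :=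
  fun i j => if j = ℓ then A i j else 0

/-- Entrywise max of matrices. -/
def mmax {n : ℕ} (A B : Matrix (Fin n) (Fin n) ℚ) : Matrix (Fin n) (Fin n) ℚ :=
  fun i j => max (A i j) (B i j)

section Aux
variable {n : ℕ} {S : Matrix (Fin n) (Fin n) ℚ}

def HD (S : Matrix (Fin n) (Fin n) ℚ) : Prop := (∀ i j, i ≠ j → S i j = 0) ∧ (∀ i, 0 < S i i)

lemma Sinv_eq (hS : HD S) : S⁻¹ = fun i j => if i = j then (S i i)⁻¹ else 0 := by
  apply inv_eq_left_inv
  ext i j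
  simp only [Matrix.mul_apply, Matrix.one_apply]
  show ∑ k, (if i = k then (S i i)⁻¹ else 0) * S k j = if i = j then 1 else 0
  rw [Finset.sum_eq_single i]
  · by_cases h : i = j
    · subst h; simp [inv_mul_cancel₀ (hS.2 i).ne']
    · simp [h, hS.1 i j h]
  · intro k _ hk
    simp [Ne.symm hk]
  · simp

lemma conj_apply (hS : HD S) (A : Matrix (Fin n) (Fin n) ℚ) (i j : Fin n) :
    (S⁻¹ * A * S) i j = (S i i)⁻¹ * A i j * S j j := by
  rw [Sinv_eq hS]
  simp only [Matrix.mul_apply]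
  rw [Finset.sum_eq_single j]
  · congr 1
    show ∑ k, (if i = k then (S i i)⁻¹ else 0) * A k j = _
    rw [Finset.sum_eq_single i]
    · simp
    · intro k _ hk; simp [Ne.symm hk]
    · simp
  · intro k _ hk
    rw [hS.1 k j hk, mul_zero]
  · simp

lemma scal_max (c d a : ℚ) (hc : 0 < c) (hdd : 0 < d) :
    max (c * a * d) 0 = c * max a 0 * d := by
  rcases le_total a 0 with h | h
  · rw [max_eq_right h, max_eq_right, mul_zero, zero_mul]
    exact mul_nonpos_of_nonpos_of_nonneg (mul_nonpos_of_nonneg_of_nonpos hc.le h) hdd.le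
  · rw [max_eq_left h, max_eq_left]
    exact mul_nonneg (mul_nonneg hc.le h) hdd.le

lemma posP_conj (hS : HD S) (A : Matrix (Fin n) (Fin n) ℚ) :
    posP (S⁻¹ * A * S) = S⁻¹ * posP A * S := by
  ext i j
  rw [show posP (S⁻¹ * A * S) i j = max ((S⁻¹ * A * S) i j) 0 from rfl,
    conj_apply hS, conj_apply hS]
  exact scal_max _ _ _ (inv_pos.2 (hS.2 i)) (hS.2 j)

lemma colR_conj (hS : HD S) (ℓ : Fin n) (A : Matrix (Fin n) (Fin n) ℚ) :
    colR ℓ (S⁻¹ * A * S) = S⁻¹ * colR ℓ A * S := by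
  ext i j
  rw [show colR ℓ (S⁻¹ * A * S) i j = if j = ℓ then (S⁻¹ * A * S) i j else 0 from rfl,
    conj_apply hS, conj_apply hS]
  show _ = (S i i)⁻¹ * (if j = ℓ then A i j else 0) * S j j
  split <;> simp [conj_apply hS]

lemma mmax_conj (hS : HD S) (A B : Matrix (Fin n) (Fin n) ℚ) :
    mmax (S⁻¹ * A * S) (S⁻¹ * B * S) = S⁻¹ * mmax A B * S := by
  ext i j
  rw [show mmax (S⁻¹ * A * S) (S⁻¹ * B * S) i j
      = max ((S⁻¹ * A * S) i j) ((S⁻¹ * B * S) i j) from rfl,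
    conj_apply hS, conj_apply hS, conj_apply hS]
  show _ = (S i i)⁻¹ * max (A i j) (B i j) * S j j
  have hc : (0:ℚ) < (S i i)⁻¹ := inv_pos.2 (hS.2 i)
  rcases le_total (A i j) (B i j) with h | h
  · rw [max_eq_right h, max_eq_right]
    exact mul_le_mul_of_nonneg_right (mul_le_mul_of_nonneg_left h hc.le) (hS.2 j).le
  · rw [max_eq_left h, max_eq_left]
    exact mul_le_mul_of_nonneg_right (mul_le_mul_of_nonneg_left h hc.le) (hS.2 j).le

lemma SS_inv (hS : HD S) : S * S⁻¹ = 1 := by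
  rw [Sinv_eq hS]
  ext i j
  simp only [Matrix.mul_apply, Matrix.one_apply]
  show ∑ k, S i k * (if k = j then (S k k)⁻¹ else 0) = if i = j then 1 else 0
  rw [Finset.sum_eq_single j]
  · by_cases h : i = j
    · subst h; simp [mul_inv_cancel₀ (hS.2 i).ne']
    · simp [h, hS.1 i j h]
  · intro k _ hk; simp [hk]
  · simp

lemma mul_conj (hS : HD S) (A B : Matrix (Fin n) (Fin n) ℚ) :
    (S⁻¹ * A * S) * (S⁻¹ * B * S) = S⁻¹ * (A * B) * S := by
  calc (S⁻¹ * A * S) * (S⁻¹ * B * S)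
      = S⁻¹ * (A * ((S * S⁻¹) * (B * S))) := by simp only [Matrix.mul_assoc]
    _ = S⁻¹ * (A * B) * S := by rw [SS_inv hS, one_mul]; simp only [Matrix.mul_assoc]

lemma add_conj (hS : HD S) (A B : Matrix (Fin n) (Fin n) ℚ) :
    (S⁻¹ * A * S) + (S⁻¹ * B * S) = S⁻¹ * (A + B) * S := by
  rw [Matrix.mul_add, Matrix.add_mul]

lemma neg_conj (hS : HD S) (A : Matrix (Fin n) (Fin n) ℚ) :
    -(S⁻¹ * A * S) = S⁻¹ * (-A) * S := by
  simp [Matrix.mul_neg, Matrix.neg_mul]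

lemma Jmat_comm (hS : HD S) (ℓ : Fin n) : S * Jmat ℓ = Jmat ℓ * S := by
  ext i j
  simp only [Matrix.mul_apply, Jmat]
  rw [Finset.sum_eq_single j, Finset.sum_eq_single i]
  · by_cases h : i = j
    · subst h; simp
    · simp [h, hS.1 i j h, Ne.symm h]
  · intro k _ hk; simp [Ne.symm hk]
  · simp
  · intro k _ hk; simp [hk]
  · simp

lemma Jmat_conj (hS : HD S) (ℓ : Fin n) (A : Matrix (Fin n) (Fin n) ℚ) :
    (S⁻¹ * A * S) * Jmat ℓ = S⁻¹ * (A * Jmat ℓ) * S := by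
  rw [Matrix.mul_assoc (S⁻¹ * A) S (Jmat ℓ), Jmat_comm hS ℓ,
    ← Matrix.mul_assoc, Matrix.mul_assoc S⁻¹ A (Jmat ℓ)]

end Aux

/-- `F_t^{B;t₀} = S⁻¹ · F_t^{-Bᵀ;t₀} · S` for a skew-symmetrizer `S` of `B`:
any two families of matrices (indexed by vertices of the `n`-regular tree, modeled
by mutation sequences `List (Fin n)` starting at the root `[]`) satisfying the
`F`-matrix mutation recursion
`F_{t'} = F_t J_ℓ + max([C_t]₊^{•ℓ} + F_t [B_t]₊^{•ℓ}, [-C_t]₊^{•ℓ} + F_t [-B_t]₊^{•ℓ})`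
with initial condition `F_{t₀} = 0`, whose `C`-data satisfy
`C_t = S⁻¹ C'_t S` and whose exchange matrices satisfy `B_t = S⁻¹(-B_tᵀ)S` and
`B'_t = -B_tᵀ`, are conjugate by `S`. -/
theorem Fmatrix_skew_symmetrizer_conjugation {n : ℕ}
    (S : Matrix (Fin n) (Fin n) ℚ)
    (hSdiag : ∀ i j, i ≠ j → S i j = 0) (hSpos : ∀ i, 0 < S i i)
    (Bm Bm' Cm Cm' F F' : List (Fin n) → Matrix (Fin n) (Fin n) ℚ)
    (hBdual : ∀ t, Bm' t = -(Bm t)ᵀ)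
    (hBconj : ∀ t, Bm t = S⁻¹ * (-(Bm t)ᵀ) * S)
    (hCconj : ∀ t, Cm t = S⁻¹ * Cm' t * S)
    (hF0 : F [] = 0) (hF'0 : F' [] = 0)
    (hFrec : ∀ (t : List (Fin n)) (ℓ : Fin n),
      F (ℓ :: t) = F t * Jmat ℓ +
        mmax (colR ℓ (posP (Cm t)) + F t * colR ℓ (posP (Bm t)))
             (colR ℓ (posP (-(Cm t))) + F t * colR ℓ (posP (-(Bm t)))))
    (hF'rec : ∀ (t : List (Fin n)) (ℓ : Fin n),
      F' (ℓ :: t) = F' t * Jmat ℓ +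
        mmax (colR ℓ (posP (Cm' t)) + F' t * colR ℓ (posP (Bm' t)))
             (colR ℓ (posP (-(Cm' t))) + F' t * colR ℓ (posP (-(Bm' t))))) :
    ∀ t : List (Fin n), F t = S⁻¹ * F' t * S := by
  intro t
  have hS : HD S := ⟨hSdiag, hSpos⟩
  induction t with
  | nil => rw [hF0, hF'0]; simp
  | cons ℓ t ih =>
    have hB : Bm t = S⁻¹ * Bm' t * S := by rw [hBconj t, ← hBdual t]
    rw [hFrec, hF'rec, ih, hB, hCconj]
    rw [neg_conj hS, neg_conj hS, posP_conj hS, posP_conj hS, posP_conj hS, posP_conj hS,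
        colR_conj hS, colR_conj hS, colR_conj hS, colR_conj hS,
        mul_conj hS, mul_conj hS, Jmat_conj hS, add_conj hS, add_conj hS, mmax_conj hS,
        add_conj hS]
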